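/- arXiv:1712.10142 — 3 statements merged into one kernel-verified Lean document; each statement's English description precedes it below -/
import Mathlib

section
/- Let C be an algebraically closed field and σ, τ irreducible smooth admissible representations of locally profinite groups G₁, G₂ over C whose endomorphism algebras are C (Schur's lemma). Then the external tensor product σ ⊗_C τ is an irreducible representation of G₁ × G₂. -/
open scoped TensorProduct

section Defs

variable {C G V : Type*} [CommRing C] [Group G]
  [AddCommGroup V] [Module C V]

/-- A submodule stable under the group action. -/
def IsSubrep (ρ : Representation C G V) (W : Submodule C V) : Prop :=
  ∀ g : G, ∀ v ∈ W, ρ g v ∈ W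

/-- An irreducible (simple, nonzero) representation. -/
def IsIrreducibleRep (ρ : Representation C G V) : Prop :=
  Nontrivial V ∧ ∀ W : Submodule C V, IsSubrep ρ W → W = ⊥ ∨ W = ⊤

variable [TopologicalSpace G]

/-- A representation is smooth if every vector is fixed by some open subgroup. -/
def IsSmoothRep (ρ : Representation C G V) : Prop :=
  ∀ v : V, ∃ U : Subgroup G, IsOpen (U : Set G) ∧ ∀ g ∈ U, ρ g v = v

/-- The submodule of `K`-invariant vectors. -/
def repInvariants (ρ : Representation C G V) (K : Subgroup G) : Submodule C V where
  carrier := {v | ∀ g ∈ K, ρ g v = v}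
  zero_mem' := by intro g _; simp
  add_mem' := by intro a b ha hb g hg; simp [map_add, ha g hg, hb g hg]
  smul_mem' := by intro c a ha g hg; simp [map_smul, ha g hg]

/-- A smooth representation is admissible if the `K`-invariants are
finite-dimensional for every open compact subgroup `K`. -/
def IsAdmissibleRep (ρ : Representation C G V) : Prop :=
  IsSmoothRep ρ ∧ ∀ K : Subgroup G, IsOpen (K : Set G) → IsCompact (K : Set G) →
    Module.Finite C (repInvariants ρ K)

end Defs

/-- The external tensor product of two representations. -/
noncomputable def extTensorRep {C G₁ G₂ V₁ V₂ : Type*} [CommRing C]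
    [Group G₁] [Group G₂]
    [AddCommGroup V₁] [Module C V₁] [AddCommGroup V₂] [Module C V₂]
    (σ : Representation C G₁ V₁) (τ : Representation C G₂ V₂) :
    Representation C (G₁ × G₂) (V₁ ⊗[C] V₂) where
  toFun p := TensorProduct.map (σ p.1) (τ p.2)
  map_one' := by simp [TensorProduct.map_id]
  map_mul' p q := by
    simp only [Prod.fst_mul, Prod.snd_mul, map_mul]
    exact TensorProduct.map_mul (σ p.1) (σ q.1) (τ p.2) (τ q.2)




section Aux
variable {C G V : Type*} [Field C] [Group G] [AddCommGroup V] [Module C V]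

noncomputable def evalRep' (ρ : Representation C G V) (v : V) : MonoidAlgebra C G →ₗ[C] V where
  toFun a := ρ.asAlgebraHom a v
  map_add' a b := by simp [map_add]
  map_smul' c a := by simp [map_smul]

@[simp] lemma evalRep'_apply (ρ : Representation C G V) (v : V) (a : MonoidAlgebra C G) :
    evalRep' ρ v a = ρ.asAlgebraHom a v := rfl

lemma evalRep'_of_mul (ρ : Representation C G V) (v : V) (g : G) (a : MonoidAlgebra C G) :
    evalRep' ρ v (MonoidAlgebra.of C G g * a) = ρ g (evalRep' ρ v a) := by
  simp [map_mul, Representation.asAlgebraHom_of, Module.End.mul_apply]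

lemma evalRep'_surjective (ρ : Representation C G V)
    (hirr : ∀ W : Submodule C V, IsSubrep ρ W → W = ⊥ ∨ W = ⊤)
    {v : V} (hv : v ≠ 0) : Function.Surjective (evalRep' ρ v) := by
  have hsub : IsSubrep ρ (LinearMap.range (evalRep' ρ v)) := by
    rintro g x ⟨a, rfl⟩
    exact ⟨MonoidAlgebra.of C G g * a, evalRep'_of_mul ρ v g a⟩
  rcases hirr _ hsub with h | h
  · exfalso
    apply hv
    have hmem : v ∈ LinearMap.range (evalRep' ρ v) := ⟨1, by simp⟩
    rw [h] at hmem
    simpa using hmem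
  · intro x
    have : x ∈ LinearMap.range (evalRep' ρ v) := h ▸ Submodule.mem_top
    exact this

lemma exists_smul_of_ann (ρ : Representation C G V)
    (hirr : ∀ W : Submodule C V, IsSubrep ρ W → W = ⊥ ∨ W = ⊤)
    (hSchur : ∀ f : V →ₗ[C] V, (∀ g : G, f ∘ₗ ρ g = ρ g ∘ₗ f) →
      ∃ c : C, f = c • LinearMap.id)
    {v w : V} (hv : v ≠ 0)
    (h : ∀ a : MonoidAlgebra C G, ρ.asAlgebraHom a v = 0 → ρ.asAlgebraHom a w = 0) :
    ∃ c : C, w = c • v := by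
  have hsurj := evalRep'_surjective ρ hirr hv
  have hker : LinearMap.ker (evalRep' ρ v) ≤ LinearMap.ker (evalRep' ρ w) := fun a ha => h a ha
  let e := (evalRep' ρ v).quotKerEquivOfSurjective hsurj
  let f : V →ₗ[C] V :=
    ((LinearMap.ker (evalRep' ρ v)).liftQ (evalRep' ρ w) hker) ∘ₗ e.symm.toLinearMap
  have hf : ∀ a, f (evalRep' ρ v a) = evalRep' ρ w a := by
    intro a
    have he : e (Submodule.Quotient.mk a) = evalRep' ρ v a := rfl
    have h2 : e.symm (evalRep' ρ v a) = Submodule.Quotient.mk a := by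
      rw [← he, LinearEquiv.symm_apply_apply]
    simp only [f, LinearMap.comp_apply, LinearEquiv.coe_coe, h2]
    exact Submodule.liftQ_apply _ _ _
  have hcomm : ∀ g : G, f ∘ₗ ρ g = ρ g ∘ₗ f := by
    intro g
    refine LinearMap.ext fun x => ?_
    obtain ⟨a, rfl⟩ := hsurj x
    calc f (ρ g (evalRep' ρ v a)) = f (evalRep' ρ v (MonoidAlgebra.of C G g * a)) := by
          rw [evalRep'_of_mul]
      _ = evalRep' ρ w (MonoidAlgebra.of C G g * a) := hf _
      _ = ρ g (evalRep' ρ w a) := evalRep'_of_mul ρ w g a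
      _ = ρ g (f (evalRep' ρ v a)) := by rw [hf]
  obtain ⟨c, hc⟩ := hSchur f hcomm
  refine ⟨c, ?_⟩
  have hw : w = f v := by
    have := hf 1
    simpa using this.symm
  rw [hw, hc]
  simp

end Aux
/-- Let `C` be an algebraically closed field and `σ, τ` irreducible smooth
admissible representations of locally profinite groups `G₁, G₂` whose
endomorphism algebras are `C` (Schur's lemma).  Then the external tensor
product `σ ⊗_C τ` is an irreducible representation of `G₁ × G₂`. -/
theorem extTensor_irreducible
    {C G₁ G₂ V₁ V₂ : Type*} [Field C] [IsAlgClosed C]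
    [Group G₁] [TopologicalSpace G₁] [IsTopologicalGroup G₁]
    [Group G₂] [TopologicalSpace G₂] [IsTopologicalGroup G₂]
    [AddCommGroup V₁] [Module C V₁] [AddCommGroup V₂] [Module C V₂]
    (σ : Representation C G₁ V₁) (τ : Representation C G₂ V₂)
    (hσadm : IsAdmissibleRep σ) (hτadm : IsAdmissibleRep τ)
    (hσirr : IsIrreducibleRep σ) (hτirr : IsIrreducibleRep τ)
    (hσSchur : ∀ f : V₁ →ₗ[C] V₁, (∀ g : G₁, f ∘ₗ σ g = σ g ∘ₗ f) →
      ∃ c : C, f = c • LinearMap.id)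
    (hτSchur : ∀ f : V₂ →ₗ[C] V₂, (∀ g : G₂, f ∘ₗ τ g = τ g ∘ₗ f) →
      ∃ c : C, f = c • LinearMap.id) :
    IsIrreducibleRep (extTensorRep σ τ) := by
  classical
  obtain ⟨hV₁, hσtop⟩ := hσirr
  obtain ⟨hV₂, hτtop⟩ := hτirr
  let b := Module.Basis.ofVectorSpace C V₂
  let φ : V₁ ⊗[C] V₂ ≃ₗ[C] (Module.Basis.ofVectorSpaceIndex C V₂ →₀ V₁) :=
    TensorProduct.equivFinsuppOfBasisRight b
  obtain ⟨v1, hv1⟩ := exists_ne (0 : V₁)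
  obtain ⟨v2, hv2⟩ := exists_ne (0 : V₂)
  -- nontriviality of the tensor product
  have hnt : Nontrivial (V₁ ⊗[C] V₂) := by
    refine ⟨v1 ⊗ₜ v2, 0, fun h => ?_⟩
    have hrepr : b.repr v2 ≠ 0 := fun hh => hv2 (by
      have := congrArg b.repr.symm hh
      simpa using this)
    obtain ⟨i, hi⟩ := Finsupp.ne_iff.mp hrepr
    have hzero := DFunLike.congr_fun (congrArg φ h) i
    rw [map_zero] at hzero
    have hval : φ (v1 ⊗ₜ[C] v2) i = b.repr v2 i • v1 :=
      TensorProduct.equivFinsuppOfBasisRight_apply_tmul_apply b v1 v2 i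
    rw [hval] at hzero
    simp only [Finsupp.coe_zero, Pi.zero_apply] at hzero
    rcases smul_eq_zero.mp hzero with h1 | h1
    · exact hi (by simpa using h1)
    · exact hv1 h1
  refine ⟨hnt, fun W hW => ?_⟩
  by_cases hWbot : W = ⊥
  · exact Or.inl hWbot
  right
  -- stability of W under the two factors
  have hstab1 : ∀ (g : G₁), ∀ w ∈ W, TensorProduct.map (σ g) LinearMap.id w ∈ W := by
    intro g w hw
    have := hW (g, 1) w hw
    simpa [extTensorRep, map_one, Module.End.one_eq_id] using this
  have hstab2 : ∀ (g : G₂), ∀ w ∈ W, TensorProduct.map LinearMap.id (τ g) w ∈ W := by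
    intro g w hw
    have := hW (1, g) w hw
    simpa [extTensorRep, map_one, Module.End.one_eq_id] using this
  -- stability under the whole group algebra of G₁ acting on the left factor
  have hstabA : ∀ (a : MonoidAlgebra C G₁), ∀ w ∈ W,
      TensorProduct.map (σ.asAlgebraHom a) LinearMap.id w ∈ W := by
    intro a
    induction a using MonoidAlgebra.induction_on with
    | of g =>
      intro w hw
      simpa [Representation.asAlgebraHom_of] using hstab1 g w hw
    | add x y hx hy =>
      intro w hw
      rw [map_add, TensorProduct.map_add_left]
      exact W.add_mem (hx w hw) (hy w hw)
    | smul r x hx =>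
      intro w hw
      rw [map_smul, TensorProduct.map_smul_left]
      exact W.smul_mem r (hx w hw)
  -- compatibility of φ with maps on the first factor
  have hφmap : ∀ (f : V₁ →ₗ[C] V₁) (t : V₁ ⊗[C] V₂) (i),
      φ (TensorProduct.map f LinearMap.id t) i = f (φ t i) := by
    intro f t
    induction t using TensorProduct.induction_on with
    | zero => intro i; simp
    | tmul x y =>
      intro i
      simp [φ, TensorProduct.equivFinsuppOfBasisRight_apply_tmul_apply, map_smul]
    | add x y hx hy =>
      intro i
      simp only [map_add, Finsupp.add_apply, hx i, hy i]
  -- take an element of W of minimal support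
  obtain ⟨t₀, ht₀W, ht₀⟩ := (Submodule.ne_bot_iff W).mp hWbot
  have hex : ∃ n, ∃ t, (t ∈ W ∧ t ≠ 0) ∧ (φ t).support.card = n :=
    ⟨_, t₀, ⟨ht₀W, ht₀⟩, rfl⟩
  obtain ⟨t, ⟨htW, htne⟩, htcard⟩ := Nat.find_spec hex
  have hmin : ∀ t', t' ∈ W → t' ≠ 0 → Nat.find hex ≤ (φ t').support.card :=
    fun t' h1 h2 => Nat.find_min' hex ⟨t', ⟨h1, h2⟩, rfl⟩
  have hφt : φ t ≠ 0 := fun h => htne ((LinearEquiv.map_eq_zero_iff φ).mp h)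
  obtain ⟨i₀, hi₀⟩ := Finsupp.support_nonempty_iff.mpr hφt
  set v₀ := φ t i₀ with hv₀def
  have hv₀ : v₀ ≠ 0 := Finsupp.mem_support_iff.mp hi₀
  -- annihilator condition
  have hann : ∀ a : MonoidAlgebra C G₁, σ.asAlgebraHom a v₀ = 0 →
      ∀ j, σ.asAlgebraHom a (φ t j) = 0 := by
    intro a ha j
    set t' := TensorProduct.map (σ.asAlgebraHom a) LinearMap.id t with ht'def
    have ht'W : t' ∈ W := hstabA a t htW
    have hφt' : ∀ i, φ t' i = σ.asAlgebraHom a (φ t i) := fun i => hφmap _ t i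
    have hsub : (φ t').support ⊆ (φ t).support.erase i₀ := by
      intro i hi
      have hne := Finsupp.mem_support_iff.mp hi
      rw [hφt'] at hne
      refine Finset.mem_erase.mpr ⟨?_, Finsupp.mem_support_iff.mpr fun h => hne (by rw [h]; simp)⟩
      rintro rfl
      exact hne ha
    have hzero : t' = 0 := by
      by_contra h0
      have h1 := hmin t' ht'W h0
      have h2 : (φ t').support.card ≤ ((φ t).support.erase i₀).card :=
        Finset.card_le_card hsub
      rw [Finset.card_erase_of_mem hi₀, htcard] at h2
      have h3 : 0 < Nat.find hex := htcard ▸ Finset.card_pos.mpr ⟨i₀, hi₀⟩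
      omega
    rw [← hφt' j, hzero]
    simp
  -- each component of φ t is a multiple of v₀
  have hc : ∀ j, ∃ c : C, φ t j = c • v₀ := fun j =>
    exists_smul_of_ann σ hσtop hσSchur hv₀ (fun a ha => hann a ha j)
  choose c hcspec using hc
  set u : V₂ := ∑ j ∈ (φ t).support, c j • (b j : V₂) with hudef
  have htu : t = v₀ ⊗ₜ[C] u := by
    have h1 : t = ((φ t).sum fun i m => m ⊗ₜ[C] (b i : V₂)) :=
      (φ.symm_apply_apply t).symm.trans
        (TensorProduct.equivFinsuppOfBasisRight_symm_apply b (φ t))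
    rw [h1, Finsupp.sum, hudef, TensorProduct.tmul_sum]
    refine Finset.sum_congr rfl fun j hj => ?_
    rw [hcspec j, TensorProduct.smul_tmul]
  have hu : u ≠ 0 := fun h => htne (by rw [htu, h, TensorProduct.tmul_zero])
  have htuW : v₀ ⊗ₜ[C] u ∈ W := htu ▸ htW
  -- first propagation: all x ⊗ u belong to W
  have hall1 : ∀ x : V₁, x ⊗ₜ[C] u ∈ W := by
    have hsub : IsSubrep σ (W.comap ((TensorProduct.mk C V₁ V₂).flip u)) := by
      intro g x hx
      simp only [Submodule.mem_comap, LinearMap.flip_apply, TensorProduct.mk_apply] at hx ⊢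
      have := hstab1 g (x ⊗ₜ u) hx
      simpa using this
    rcases hσtop _ hsub with h | h
    · exfalso
      have hmem : v₀ ∈ W.comap ((TensorProduct.mk C V₁ V₂).flip u) := by
        simpa using htuW
      rw [h] at hmem
      exact hv₀ (by simpa using hmem)
    · intro x
      have : x ∈ W.comap ((TensorProduct.mk C V₁ V₂).flip u) := h ▸ Submodule.mem_top
      simpa using this
  -- second propagation: all pure tensors belong to W
  have hall : ∀ (x : V₁) (y : V₂), x ⊗ₜ[C] y ∈ W := by
    intro x y
    have hsub : IsSubrep τ (W.comap (TensorProduct.mk C V₁ V₂ x)) := by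
      intro g z hz
      simp only [Submodule.mem_comap, TensorProduct.mk_apply] at hz ⊢
      have := hstab2 g (x ⊗ₜ z) hz
      simpa using this
    rcases hτtop _ hsub with h | h
    · exfalso
      have hmem : u ∈ W.comap (TensorProduct.mk C V₁ V₂ x) := by
        simpa using hall1 x
      rw [h] at hmem
      exact hu (by simpa using hmem)
    · have : y ∈ W.comap (TensorProduct.mk C V₁ V₂ x) := h ▸ Submodule.mem_top
      simpa using this
  rw [eq_top_iff, ← TensorProduct.span_tmul_eq_top C V₁ V₂, Submodule.span_le]
  rintro z ⟨x, y, rfl⟩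
  exact hall x y
end

section
/- Let A and B be algebras over an algebraically closed field C. Every finite-dimensional simple module over the tensor product algebra A ⊗_C B is isomorphic to an external tensor product M ⊗_C N of a simple A-module M and a simple B-module N. -/
open scoped TensorProduct

universe u v

/-- A factorization of a module `M` over `A ⊗[C] B` as an external tensor
product `M₁ ⊗_C M₂` of a simple `A`-module `M₁` and a simple `B`-module `M₂`:
a `C`-linear equivalence `M ≃ M₁ ⊗_C M₂` intertwining the action of
`a ⊗ b ∈ A ⊗[C] B` with `(a • ·) ⊗ (b • ·)`. -/
structure ExtTensorFactorization (C : Type u) [Field C]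
    (A B : Type u) [Ring A] [Ring B] [Algebra C A] [Algebra C B]
    (M : Type u) [AddCommGroup M] [Module (A ⊗[C] B) M]
    [Module C M] [IsScalarTower C (A ⊗[C] B) M] : Type (u + 1) where
  M₁ : Type u
  M₂ : Type u
  [acg₁ : AddCommGroup M₁]
  [acg₂ : AddCommGroup M₂]
  [modC₁ : Module C M₁]
  [modC₂ : Module C M₂]
  [modA : Module A M₁]
  [modB : Module B M₂]
  [scc₁ : SMulCommClass A C M₁]
  [scc₂ : SMulCommClass B C M₂]
  simple₁ : IsSimpleModule A M₁
  simple₂ : IsSimpleModule B M₂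
  equiv : M ≃ₗ[C] (M₁ ⊗[C] M₂)
  equiv_smul : ∀ (a : A) (b : B) (m : M),
    equiv ((a ⊗ₜ[C] b) • m) =
      TensorProduct.map (DistribMulAction.toLinearMap C M₁ a)
        (DistribMulAction.toLinearMap C M₂ b) (equiv m)

attribute [instance] ExtTensorFactorization.acg₁ ExtTensorFactorization.acg₂
  ExtTensorFactorization.modC₁ ExtTensorFactorization.modC₂
  ExtTensorFactorization.modA ExtTensorFactorization.modB
  ExtTensorFactorization.scc₁ ExtTensorFactorization.scc₂

namespace ExtAux

set_option linter.unusedSectionVars false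

section Schur

variable {C : Type*} [Field C] {A : Type*} [Ring A] [Algebra C A]
variable {N : Type*} [AddCommGroup N] [Module A N] [Module C N]
  [IsScalarTower C A N] [SMulCommClass A C N]

theorem end_exists_scalar [IsAlgClosed C] [FiniteDimensional C N]
    (hs : IsSimpleModule A N) (f : N →ₗ[A] N) :
    ∃ c : C, ∀ n : N, f n = c • n := by
  haveI : Nontrivial N := IsSimpleModule.nontrivial A N
  obtain ⟨c, hc⟩ :=
    Module.End.exists_eigenvalue (LinearMap.restrictScalars C f : Module.End C N)
  obtain ⟨v, hv⟩ := hc.exists_hasEigenvector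
  refine ⟨c, ?_⟩
  let E : Submodule A N :=
    { carrier := {n | f n = c • n}
      add_mem' := by
        intro x y hx hy
        simp only [Set.mem_setOf_eq] at *
        rw [map_add, hx, hy, smul_add]
      zero_mem' := by simp
      smul_mem' := by
        intro a x hx
        simp only [Set.mem_setOf_eq] at *
        rw [map_smul, hx, smul_comm] }
  have hvE : v ∈ E := hv.apply_eq_smul
  have hE : E = ⊤ := by
    rcases eq_bot_or_eq_top E with h | h
    · exact absurd (h ▸ hvE) (by simpa using hv.2)
    · exact h
  intro n
  have : n ∈ E := hE ▸ Submodule.mem_top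
  exact this

end Schur

section Key

variable {C : Type*} [Field C] {A : Type*} [Ring A] [Algebra C A]
variable {N : Type*} [AddCommGroup N] [Module A N] [Module C N]
  [IsScalarTower C A N] [SMulCommClass A C N]
variable {M : Type*} [AddCommGroup M] [Module A M] [Module C M]
  [IsScalarTower C A M] [SMulCommClass A C M]

theorem sum_apply_eq_zero (hsN : IsSimpleModule A N)
    (hend : ∀ f : N →ₗ[A] N, ∃ c : C, ∀ n, f n = c • n) :
    ∀ (r : ℕ) (f : Fin r → (N →ₗ[A] M)), LinearIndependent C f →
      ∀ m : Fin r → N, (∑ i, f i (m i)) = 0 → ∀ i, m i = 0 := by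
  intro r
  induction r with
  | zero => exact fun f _ m _ i => i.elim0
  | succ r IH =>
    intro f hf m hm
    let L : (Fin (r + 1) → N) →ₗ[A] M := ∑ i, (f i).comp (LinearMap.proj i)
    have hLapp : ∀ v : Fin (r + 1) → N, L v = ∑ i, f i (v i) := by
      intro v
      simp [L, LinearMap.sum_apply]
    have key : ∀ v : Fin (r + 1) → N, L v = 0 → v (Fin.last r) = 0 → ∀ i, v i = 0 := by
      intro v hv hlast
      rw [hLapp, Fin.sum_univ_castSucc, hlast, map_zero, add_zero] at hv
      have hf' : LinearIndependent C (f ∘ Fin.castSucc) :=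
        hf.comp _ (Fin.castSucc_injective r)
      intro i
      induction i using Fin.lastCases with
      | last => exact hlast
      | cast j => exact IH (f ∘ Fin.castSucc) hf' (fun i => v i.castSucc) hv j
    have hLm : L m = 0 := by rw [hLapp]; exact hm
    by_cases hall : ∀ v : Fin (r + 1) → N, L v = 0 → v (Fin.last r) = 0
    · exact key m hLm (hall m hLm)
    · exfalso
      push_neg at hall
      obtain ⟨v₀, hv₀L, hv₀⟩ := hall
      let K := LinearMap.ker L
      let p : K →ₗ[A] N := (LinearMap.proj (Fin.last r)).comp K.subtype
      have hpinj : Function.Injective p := by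
        intro k k' hkk
        have h1 : L ((k : Fin (r + 1) → N) - k') = 0 := by
          rw [map_sub, LinearMap.mem_ker.mp k.2, LinearMap.mem_ker.mp k'.2, sub_zero]
        have h2 : ((k : Fin (r + 1) → N) - (k' : Fin (r + 1) → N)) (Fin.last r) = 0 := by
          have : (k : Fin (r + 1) → N) (Fin.last r) = (k' : Fin (r + 1) → N) (Fin.last r) := hkk
          simp [Pi.sub_apply, this]
        have h3 := key _ h1 h2
        apply Subtype.ext
        funext i
        have := h3 i
        rwa [Pi.sub_apply, sub_eq_zero] at this
      have hpsurj : Function.Surjective p := by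
        rw [← LinearMap.range_eq_top]
        rcases eq_bot_or_eq_top (LinearMap.range p) with h | h
        · exfalso
          have hv₀K : v₀ ∈ K := LinearMap.mem_ker.mpr hv₀L
          have hmem : p ⟨v₀, hv₀K⟩ ∈ LinearMap.range p := LinearMap.mem_range_self _ _
          rw [h, Submodule.mem_bot] at hmem
          exact hv₀ hmem
        · exact h
      let e : K ≃ₗ[A] N := LinearEquiv.ofBijective p ⟨hpinj, hpsurj⟩
      have hc : ∀ i : Fin r, ∃ c : C, ∀ n : N,
          ((e.symm n : Fin (r + 1) → N) i.castSucc) = c • n := by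
        intro i
        obtain ⟨c, hcc⟩ :=
          hend (((LinearMap.proj i.castSucc).comp K.subtype).comp (e.symm : N →ₗ[A] K))
        exact ⟨c, fun n => hcc n⟩
      choose cf hcf using hc
      have hlastc : ∀ n : N, ((e.symm n : Fin (r + 1) → N)) (Fin.last r) = n := by
        intro n
        have : p (e.symm n) = n := e.apply_symm_apply n
        simpa [p] using this
      have hrel : (∑ i : Fin r, cf i • f i.castSucc) + f (Fin.last r) = 0 := by
        apply LinearMap.ext
        intro n
        have hK : L ((e.symm n : K) : Fin (r + 1) → N) = 0 :=
          LinearMap.mem_ker.mp (e.symm n).2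
        rw [hLapp, Fin.sum_univ_castSucc] at hK
        simp only [hcf, hlastc] at hK
        simpa [LinearMap.add_apply, LinearMap.sum_apply, LinearMap.smul_apply,
          LinearMap.map_smul_of_tower] using hK
      let g : Fin (r + 1) → C := Fin.lastCases 1 cf
      have hg : ∑ i, g i • f i = 0 := by
        rw [Fin.sum_univ_castSucc]
        simpa [g, Fin.lastCases_castSucc, Fin.lastCases_last, one_smul] using hrel
      have hlast0 := (Fintype.linearIndependent_iff.mp hf) g hg (Fin.last r)
      simp [g, Fin.lastCases_last] at hlast0

end Key

section Ev

variable (C : Type*) [Field C] {A : Type*} [Ring A] [Algebra C A]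
variable (N M : Type*) [AddCommGroup N] [Module A N] [Module C N]
  [IsScalarTower C A N] [SMulCommClass A C N]
variable [AddCommGroup M] [Module A M] [Module C M]
  [IsScalarTower C A M] [SMulCommClass A C M]

/-- Evaluation `N ⊗ Hom_A(N, M) → M`. -/
noncomputable def ev : N ⊗[C] (N →ₗ[A] M) →ₗ[C] M :=
  TensorProduct.lift
    { toFun := fun n =>
        { toFun := fun f => f n
          map_add' := fun _ _ => rfl
          map_smul' := fun _ _ => rfl }
      map_add' := fun n n' => LinearMap.ext fun f => map_add f n n'
      map_smul' := fun c n => LinearMap.ext fun f => f.map_smul_of_tower c n }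

@[simp] theorem ev_tmul (n : N) (f : N →ₗ[A] M) : ev C N M (n ⊗ₜ[C] f) = f n := by
  simp [ev]

theorem ev_injective [FiniteDimensional C (N →ₗ[A] M)]
    (hsN : IsSimpleModule A N)
    (hend : ∀ f : N →ₗ[A] N, ∃ c : C, ∀ n, f n = c • n) :
    Function.Injective (ev (A := A) C N M) := by
  rw [← LinearMap.ker_eq_bot, Submodule.eq_bot_iff]
  intro y hy
  set d := Module.finrank C (N →ₗ[A] M) with hd
  let bb := Module.finBasis C (N →ₗ[A] M)
  let Ψ : (Fin d → N) →ₗ[C] N ⊗[C] (N →ₗ[A] M) :=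
    ∑ i, ((TensorProduct.mk C N (N →ₗ[A] M)).flip (bb i)).comp (LinearMap.proj i)
  have hΨ : ∀ v, Ψ v = ∑ i, v i ⊗ₜ[C] bb i := by
    intro v
    simp [Ψ, LinearMap.sum_apply, TensorProduct.mk_apply]
    rfl
  have hΨsurj : Function.Surjective Ψ := by
    rw [← LinearMap.range_eq_top, ← top_le_iff,
      ← TensorProduct.span_tmul_eq_top C N (N →ₗ[A] M), Submodule.span_le]
    rintro _ ⟨m, f, rfl⟩
    refine ⟨fun i => bb.repr f i • m, ?_⟩
    rw [hΨ]
    calc ∑ i, (bb.repr f i • m) ⊗ₜ[C] bb i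
        = ∑ i, m ⊗ₜ[C] (bb.repr f i • bb i) := by
          simp [TensorProduct.smul_tmul, TensorProduct.tmul_smul]
      _ = m ⊗ₜ[C] f := by rw [← TensorProduct.tmul_sum, Module.Basis.sum_repr]
  obtain ⟨v, rfl⟩ := hΨsurj y
  have h0 : ∑ i, bb i (v i) = 0 := by
    have hz : ev C N M (Ψ v) = 0 := LinearMap.mem_ker.mp hy
    rw [hΨ] at hz
    simpa [map_sum] using hz
  have hv := sum_apply_eq_zero hsN hend d (fun i => bb i)
    bb.linearIndependent v h0
  have : v = 0 := funext hv
  rw [hΨ, this]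
  simp

end Ev

end ExtAux

/-- Let `A, B` be algebras over an algebraically closed field `C`.  Every
finite-dimensional simple module over `A ⊗_C B` is isomorphic to an external
tensor product `M₁ ⊗_C M₂` of a simple `A`-module and a simple `B`-module. -/
theorem simple_module_over_tensor_is_factorizable
    (C : Type u) [Field C] [IsAlgClosed C]
    (A B : Type u) [Ring A] [Ring B] [Algebra C A] [Algebra C B]
    (M : Type u) [AddCommGroup M] [Module (A ⊗[C] B) M]
    [Module C M] [IsScalarTower C (A ⊗[C] B) M]
    [IsSimpleModule (A ⊗[C] B) M] [FiniteDimensional C M] :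
    Nonempty (ExtTensorFactorization C A B M) := by
  classical
  letI instA : Module A M :=
    Module.compHom M (Algebra.TensorProduct.includeLeft (R := C) (S := C)
      (A := A) (B := B)).toRingHom
  letI instB : Module B M :=
    Module.compHom M (Algebra.TensorProduct.includeRight (R := C)
      (A := A) (B := B)).toRingHom
  have hsmulA : ∀ (a : A) (m : M), a • m = (a ⊗ₜ[C] (1 : B)) • m := fun _ _ => rfl
  have hsmulB : ∀ (b : B) (m : M), b • m = ((1 : A) ⊗ₜ[C] b) • m := fun _ _ => rfl
  have hAB : ∀ (a : A) (b : B) (m : M), a • (b • m) = (a ⊗ₜ[C] b) • m := by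
    intro a b m
    rw [hsmulB, hsmulA, ← mul_smul, Algebra.TensorProduct.tmul_mul_tmul, mul_one, one_mul]
  have hBA : ∀ (a : A) (b : B) (m : M), b • (a • m) = (a ⊗ₜ[C] b) • m := by
    intro a b m
    rw [hsmulA, hsmulB, ← mul_smul, Algebra.TensorProduct.tmul_mul_tmul, mul_one, one_mul]
  haveI sccAB : SMulCommClass A B M := ⟨fun a b m => by rw [hAB, hBA]⟩
  have hRC : ∀ (r : A ⊗[C] B) (c : C) (m : M), r • (c • m) = c • (r • m) := by
    intro r c m
    calc r • c • m = r • ((algebraMap C (A ⊗[C] B) c) • m) := by rw [algebraMap_smul]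
      _ = (r * algebraMap C (A ⊗[C] B) c) • m := (mul_smul _ _ _).symm
      _ = (algebraMap C (A ⊗[C] B) c * r) • m := by rw [Algebra.commutes]
      _ = c • (r • m) := by rw [mul_smul, algebraMap_smul]
  haveI sccAC : SMulCommClass A C M :=
    ⟨fun a c m => by rw [hsmulA a (c • m), hsmulA a m]; exact hRC _ _ _⟩
  haveI sccBC : SMulCommClass B C M :=
    ⟨fun b c m => by rw [hsmulB b (c • m), hsmulB b m]; exact hRC _ _ _⟩
  haveI tCA : IsScalarTower C A M := ⟨fun c a m => by
    rw [hsmulA (c • a) m, hsmulA a m, ← TensorProduct.smul_tmul']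
    exact smul_assoc _ _ _⟩
  haveI tCB : IsScalarTower C B M := ⟨fun c b m => by
    rw [hsmulB (c • b) m, hsmulB b m, TensorProduct.tmul_smul]
    exact smul_assoc _ _ _⟩
  haveI : Nontrivial M := IsSimpleModule.nontrivial (A ⊗[C] B) M
  haveI : IsArtinian A M := isArtinian_of_tower C (inferInstance : IsArtinian C M)
  haveI : IsAtomic (Submodule A M) :=
    isAtomic_of_orderBot_wellFounded_lt ((isArtinian_iff A M).mp inferInstance)
  obtain ⟨m0, hm0⟩ := exists_ne (0 : M)
  haveI : Nontrivial (Submodule A M) :=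
    ⟨⊥, ⊤, fun h => hm0 ((Submodule.mem_bot A).mp (by rw [h]; exact Submodule.mem_top))⟩
  obtain ⟨S, hS⟩ := IsAtomic.exists_atom (α := Submodule A M)
  haveI hsimpleS : IsSimpleModule A ↥S := isSimpleModule_iff_isAtom.mpr hS
  haveI sccACS : SMulCommClass A C ↥S :=
    ⟨fun a c n => Subtype.ext (smul_comm a c (n : M))⟩
  haveI : FiniteDimensional C ↥S :=
    FiniteDimensional.of_injective ((S.subtype).restrictScalars C) Subtype.val_injective
  have hend : ∀ f : ↥S →ₗ[A] ↥S, ∃ c : C, ∀ n, f n = c • n := fun f =>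
    ExtAux.end_exists_scalar hsimpleS f
  haveI : Nontrivial ↥S := IsSimpleModule.nontrivial A ↥S
  obtain ⟨n₀, hn₀⟩ := exists_ne (0 : ↥S)
  -- the Hom-module
  set M₂ : Type u := ↥S →ₗ[A] M with hM₂
  haveI sccBCM₂ : SMulCommClass B C M₂ :=
    ⟨fun b c f => LinearMap.ext fun x => smul_comm b c (f x)⟩
  haveI tCBM₂ : IsScalarTower C B M₂ :=
    ⟨fun c b f => LinearMap.ext fun x => smul_assoc c b (f x)⟩
  haveI : FiniteDimensional C M₂ :=
    FiniteDimensional.of_injective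
      (LinearMap.restrictScalarsₗ C A (↥S) M C)
      (LinearMap.restrictScalars_injective C)
  -- evaluation
  let evv : ↥S ⊗[C] M₂ →ₗ[C] M := ExtAux.ev C ↥S M
  have hev : ∀ (n : ↥S) (f : M₂), evv (n ⊗ₜ[C] f) = f n := fun n f =>
    ExtAux.ev_tmul C ↥S M n f
  have hevinj : Function.Injective evv := ExtAux.ev_injective C ↥S M hsimpleS hend
  clear_value evv
  -- full subspaces
  have hfull : ∀ P : Submodule C M, P ≠ ⊥ →
      (∀ (a : A), ∀ x ∈ P, a • x ∈ P) → (∀ (b : B), ∀ x ∈ P, b • x ∈ P) → P = ⊤ := by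
    intro P hP hA hB
    let P' : Submodule (A ⊗[C] B) M :=
      { carrier := (P : Set M)
        add_mem' := fun hx hy => P.add_mem hx hy
        zero_mem' := P.zero_mem
        smul_mem' := by
          intro r x hx
          induction r using TensorProduct.induction_on with
          | zero => simpa using P.zero_mem
          | tmul a b =>
            show (a ⊗ₜ[C] b) • x ∈ P
            rw [← hAB]
            exact hA a _ (hB b x hx)
          | add r s hr hs =>
            show (r + s) • x ∈ P
            rw [add_smul]
            exact P.add_mem hr hs }
    rcases eq_bot_or_eq_top P' with h | h
    · exact absurd ((Submodule.eq_bot_iff P).mpr fun x hx =>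
        (Submodule.eq_bot_iff P').mp h x hx) hP
    · exact Submodule.eq_top_iff'.mpr fun x => Submodule.eq_top_iff'.mp h x
  -- surjectivity of evaluation
  have hrange : LinearMap.range evv = ⊤ := by
    apply hfull
    · intro h
      have h1 : evv (n₀ ⊗ₜ[C] S.subtype) = (n₀ : M) := by rw [hev]; rfl
      have h2 : (n₀ : M) ∈ LinearMap.range evv := h1 ▸ LinearMap.mem_range_self _ _
      rw [h, Submodule.mem_bot] at h2
      exact hn₀ (Subtype.ext h2)
    · intro a x hx
      obtain ⟨y, rfl⟩ := hx
      induction y using TensorProduct.induction_on with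
      | zero => simpa using (LinearMap.range evv).zero_mem
      | tmul n f =>
        rw [hev]
        have h1 : a • f n = f (a • n) := (map_smul f a n).symm
        rw [h1, ← hev]
        exact LinearMap.mem_range_self _ _
      | add y z hy hz =>
        rw [map_add, smul_add]
        exact (LinearMap.range evv).add_mem hy hz
    · intro b x hx
      obtain ⟨y, rfl⟩ := hx
      induction y using TensorProduct.induction_on with
      | zero => simpa using (LinearMap.range evv).zero_mem
      | tmul n f =>
        rw [hev]
        have h1 : b • f n = (b • f) n := rfl
        rw [h1, ← hev]
        exact LinearMap.mem_range_self _ _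
      | add y z hy hz =>
        rw [map_add, smul_add]
        exact (LinearMap.range evv).add_mem hy hz
  have hevsurj : Function.Surjective evv := LinearMap.range_eq_top.mp hrange
  -- duals
  have dual_exists : ∀ (n : ↥S), n ≠ 0 → ∃ lam : ↥S →ₗ[C] C, lam n = 1 := by
    intro n hn
    have h : ¬ (∀ φ : Module.Dual C ↥S, φ n = 0) := fun h =>
      hn ((Module.forall_dual_apply_eq_zero_iff C n).mp h)
    push_neg at h
    obtain ⟨φ, hφ⟩ := h
    refine ⟨(φ n)⁻¹ • φ, ?_⟩
    simp [LinearMap.smul_apply, smul_eq_mul, inv_mul_cancel₀ hφ]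
  haveI : Nontrivial M₂ :=
    ⟨S.subtype, 0, fun h => hn₀ (Subtype.ext (by
      have h2 : S.subtype n₀ = 0 := by rw [h]; rfl
      simpa using h2))⟩
  -- simplicity of M₂ over B
  obtain ⟨f₀, hf₀⟩ := exists_ne (0 : M₂)
  haveI : Nontrivial (Submodule B M₂) :=
    ⟨⊥, ⊤, fun h => hf₀ ((Submodule.mem_bot B).mp (by rw [h]; exact Submodule.mem_top))⟩
  have hsimpleM₂ : IsSimpleModule B M₂ := by
    refine IsSimpleModule.mk (toIsSimpleOrder := ⟨fun Q => ?_⟩)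
    rcases eq_or_ne Q ⊥ with h | h
    · exact Or.inl h
    refine Or.inr ?_
    have hQC : ∀ (c : C) (f : M₂), f ∈ Q → c • f ∈ Q := by
      intro c f hf
      have h1 : c • f = (algebraMap C B c) • f := by
        apply LinearMap.ext
        intro x
        rw [LinearMap.smul_apply, LinearMap.smul_apply, algebraMap_smul]
      rw [h1]
      exact Q.smul_mem _ hf
    let ι : ↥Q →ₗ[C] M₂ := (Q.subtype).restrictScalars C
    let evQ : ↥S ⊗[C] ↥Q →ₗ[C] M := evv.comp (TensorProduct.map LinearMap.id ι)
    have hevQ : ∀ (n : ↥S) (q : ↥Q), evQ (n ⊗ₜ[C] q) = (q : M₂) n := by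
      intro n q
      show evv (TensorProduct.map LinearMap.id ι (n ⊗ₜ[C] q)) = _
      rw [TensorProduct.map_tmul]
      rw [hev]
      rfl
    have hQtop : LinearMap.range evQ = ⊤ := by
      apply hfull
      · obtain ⟨q₀, hq₀Q, hq₀⟩ := (Submodule.ne_bot_iff Q).mp h
        have hq0 : ∃ n : ↥S, q₀ n ≠ 0 := by
          by_contra hc
          push_neg at hc
          exact hq₀ (LinearMap.ext hc)
        obtain ⟨n, hn⟩ := hq0
        intro hbot
        have h2 : evQ (n ⊗ₜ[C] ⟨q₀, hq₀Q⟩) ∈ LinearMap.range evQ :=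
          LinearMap.mem_range_self _ _
        rw [hbot, Submodule.mem_bot, hevQ] at h2
        exact hn h2
      · intro a x hx
        obtain ⟨y, rfl⟩ := hx
        induction y using TensorProduct.induction_on with
        | zero => simpa using (LinearMap.range evQ).zero_mem
        | tmul n q =>
          rw [hevQ]
          have h1 : a • (q : M₂) n = (q : M₂) (a • n) := (map_smul _ a n).symm
          rw [h1, ← hevQ]
          exact LinearMap.mem_range_self _ _
        | add y z hy hz =>
          rw [map_add, smul_add]
          exact (LinearMap.range evQ).add_mem hy hz
      · intro b x hx
        obtain ⟨y, rfl⟩ := hx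
        induction y using TensorProduct.induction_on with
        | zero => simpa using (LinearMap.range evQ).zero_mem
        | tmul n q =>
          rw [hevQ]
          have h1 : b • (q : M₂) n = ((b • q : ↥Q) : M₂) n := rfl
          rw [h1, ← hevQ]
          exact LinearMap.mem_range_self _ _
        | add y z hy hz =>
          rw [map_add, smul_add]
          exact (LinearMap.range evQ).add_mem hy hz
    rw [Submodule.eq_top_iff']
    intro g
    obtain ⟨lam, hlam⟩ := dual_exists n₀ hn₀
    have hg : evv (n₀ ⊗ₜ[C] g) ∈ LinearMap.range evQ := by
      rw [hQtop]; exact Submodule.mem_top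
    obtain ⟨y, hy⟩ := hg
    have hmap : TensorProduct.map LinearMap.id ι y = n₀ ⊗ₜ[C] g :=
      hevinj (show evv _ = evv _ from hy)
    let Lam : ↥S ⊗[C] M₂ →ₗ[C] M₂ := TensorProduct.lift ((LinearMap.lsmul C M₂).comp lam)
    have hLam : ∀ (n : ↥S) (f : M₂), Lam (n ⊗ₜ[C] f) = lam n • f := by
      intro n f
      simp [Lam]
    have hmemgen : ∀ z : ↥S ⊗[C] ↥Q, Lam (TensorProduct.map LinearMap.id ι z) ∈ Q := by
      intro z
      induction z using TensorProduct.induction_on with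
      | zero => simpa using Q.zero_mem
      | tmul n q =>
        rw [TensorProduct.map_tmul, hLam]
        exact hQC _ _ q.2
      | add z w hz hw =>
        rw [map_add, map_add]
        exact Q.add_mem hz hw
    have hmem : Lam (TensorProduct.map LinearMap.id ι y) ∈ Q := hmemgen y
    rw [hmap, hLam, hlam, one_smul] at hmem
    exact hmem
  -- assemble
  let eqv : M ≃ₗ[C] (↥S ⊗[C] M₂) := (LinearEquiv.ofBijective evv ⟨hevinj, hevsurj⟩).symm
  have heqv_symm : ∀ y, eqv.symm y = evv y := fun y => rfl
  refine ⟨{ M₁ := ↥S, M₂ := M₂, simple₁ := hsimpleS, simple₂ := hsimpleM₂,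
            equiv := eqv, equiv_smul := ?_ }⟩
  intro a b m
  have hcomm : ∀ y : ↥S ⊗[C] M₂,
      (a ⊗ₜ[C] b) • evv y =
        evv (TensorProduct.map (DistribMulAction.toLinearMap C ↥S a)
          (DistribMulAction.toLinearMap C M₂ b) y) := by
    intro y
    induction y using TensorProduct.induction_on with
    | zero => simp
    | tmul n f =>
      rw [TensorProduct.map_tmul, hev, hev]
      change (a ⊗ₜ[C] b) • f n = (b • f) (a • n)
      rw [← hAB]
      have h1 : ((b • f) (a • n) : M) = b • f (a • n) := rfl
      rw [h1, map_smul]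
      exact smul_comm a b (f n)
    | add y z hy hz =>
      rw [map_add, map_add, smul_add, hy, hz, map_add]
  rw [← LinearEquiv.eq_symm_apply, heqv_symm, ← hcomm]
  have hm : evv (eqv m) = m := by
    rw [← heqv_symm]
    exact eqv.symm_apply_apply m
  rw [hm]
end

section
/- Let C'/C be a field extension, A a C-algebra, and M, N two A-modules. The natural map C' ⊗_C Hom_A(M,N) → Hom_{C' ⊗_C A}(C' ⊗_C M, C' ⊗_C N) is injective, and it is bijective if C'/C is a finite extension or if M is finitely generated as an A-module. -/
set_option synthInstance.maxHeartbeats 400000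
set_option maxHeartbeats 1000000

open scoped TensorProduct

section Aux

variable (C C' : Type*) [Field C] [Field C'] [Algebra C C']

/-- Base-change equivalence via a basis of `C'` over `C`. -/
noncomputable def bcEquiv (P : Type*) [AddCommGroup P] [Module C P] :
    (C' ⊗[C] P) ≃ₗ[C] (Module.Basis.ofVectorSpaceIndex C C' →₀ P) :=
  letI := Classical.decEq (Module.Basis.ofVectorSpaceIndex C C')
  (TensorProduct.congr ((Module.Basis.ofVectorSpace C C').repr) (LinearEquiv.refl C P)).trans
    (TensorProduct.finsuppScalarLeft C P _)

variable {C C'}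

lemma bcEquiv_tmul_apply {P : Type*} [AddCommGroup P] [Module C P]
    (c' : C') (p : P) (i : Module.Basis.ofVectorSpaceIndex C C') :
    bcEquiv C C' P (c' ⊗ₜ[C] p) i = (Module.Basis.ofVectorSpace C C').repr c' i • p := by
  simp [bcEquiv]

lemma bcEquiv_symm_single {P : Type*} [AddCommGroup P] [Module C P]
    (i : Module.Basis.ofVectorSpaceIndex C C') (p : P) :
    (bcEquiv C C' P).symm (Finsupp.single i p) = (Module.Basis.ofVectorSpace C C') i ⊗ₜ[C] p := by
  rw [LinearEquiv.symm_apply_eq]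
  ext j
  rw [bcEquiv_tmul_apply, Module.Basis.repr_self]
  classical
  simp [Finsupp.single_apply, ite_smul]

lemma bcEquiv_symm_eq_sum {P : Type*} [AddCommGroup P] [Module C P]
    (l : Module.Basis.ofVectorSpaceIndex C C' →₀ P) :
    (bcEquiv C C' P).symm l = l.sum (fun i p => (Module.Basis.ofVectorSpace C C') i ⊗ₜ[C] p) := by
  induction l using Finsupp.induction_linear with
  | zero => simp
  | add x y hx hy =>
      rw [map_add, hx, hy,
        Finsupp.sum_add_index' (fun i => TensorProduct.tmul_zero _ _)
          (fun i p q => TensorProduct.tmul_add _ _ _)]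
  | single i p =>
      rw [bcEquiv_symm_single]
      exact (Finsupp.sum_single_index (h := fun j q => (Module.Basis.ofVectorSpace C C') j ⊗ₜ[C] q)
        (TensorProduct.tmul_zero _ _)).symm

lemma bcEquiv_reconstruct {P : Type*} [AddCommGroup P] [Module C P]
    (y : C' ⊗[C] P) :
    (bcEquiv C C' P y).sum (fun i p => (Module.Basis.ofVectorSpace C C') i ⊗ₜ[C] p) = y := by
  rw [← bcEquiv_symm_eq_sum, LinearEquiv.symm_apply_apply]

lemma bcEquiv_lTensor {P Q : Type*} [AddCommGroup P] [Module C P]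
    [AddCommGroup Q] [Module C Q] (φ : P →ₗ[C] Q) (y : C' ⊗[C] P)
    (i : Module.Basis.ofVectorSpaceIndex C C') :
    bcEquiv C C' Q (LinearMap.lTensor C' φ y) i = φ (bcEquiv C C' P y i) := by
  induction y with
  | zero => simp
  | tmul c' p => simp [bcEquiv_tmul_apply]
  | add x y hx hy => simp [map_add, hx, hy]

end Aux

section

variable (C C' : Type*) [Field C] [Field C'] [Algebra C C']
variable (A : Type*) [Ring A] [Algebra C A]
variable {M N : Type*}
variable [AddCommGroup M] [Module C M] [Module A M] [IsScalarTower C A M]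
  [SMulCommClass A C M]
variable [AddCommGroup N] [Module C N] [Module A N] [IsScalarTower C A N]
  [SMulCommClass A C N]

/-- A `C'`-linear map `C' ⊗_C M → C' ⊗_C N` is `A`-equivariant (i.e.
`(C' ⊗_C A)`-linear) if it commutes with the action of every `a ∈ A` on the
second tensor factor. -/
def IsEquivariantMap (g : (C' ⊗[C] M) →ₗ[C'] (C' ⊗[C] N)) : Prop :=
  ∀ a : A,
    (g.restrictScalars C) ∘ₗ
        (LinearMap.lTensor C' (DistribMulAction.toLinearMap C M a)) =
      (LinearMap.lTensor C' (DistribMulAction.toLinearMap C N a)) ∘ₗ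
        (g.restrictScalars C)

/-- Let `C'/C` be a field extension, `A` a `C`-algebra and `M, N` two
`A`-modules.  The natural map
`C' ⊗_C Hom_A(M,N) → Hom_{C' ⊗_C A}(C' ⊗_C M, C' ⊗_C N)`,
`c' ⊗ f ↦ c' • (1 ⊗ f)`, is injective (and lands in the `A`-equivariant
maps), and it is bijective onto the `A`-equivariant (`C' ⊗_C A`-linear) maps
if `C'/C` is a finite extension or `M` is finitely generated as an
`A`-module. -/
theorem baseChange_hom_injective_bijective
    (Φ : (C' ⊗[C] (M →ₗ[A] N)) →ₗ[C] ((C' ⊗[C] M) →ₗ[C'] (C' ⊗[C] N)))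
    (hΦ : ∀ (c' : C') (f : M →ₗ[A] N),
      Φ (c' ⊗ₜ[C] f) = c' • (LinearMap.baseChange C' (f.restrictScalars C))) :
    Function.Injective Φ ∧
    (∀ x, IsEquivariantMap C C' A (Φ x)) ∧
    ((FiniteDimensional C C' ∨ Module.Finite A M) →
      ∀ g : (C' ⊗[C] M) →ₗ[C'] (C' ⊗[C] N),
        IsEquivariantMap C C' A g → ∃ x, Φ x = g) := by
  classical
  set b := Module.Basis.ofVectorSpace C C' with hb
  -- key computation for injectivity
  have key1 : ∀ (x : C' ⊗[C] (M →ₗ[A] N)) (i : Module.Basis.ofVectorSpaceIndex C C') (m : M),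
      (bcEquiv C C' (M →ₗ[A] N) x i) m = bcEquiv C C' N (Φ x ((1 : C') ⊗ₜ[C] m)) i := by
    intro x i m
    induction x with
    | zero => simp
    | tmul c' f =>
        rw [bcEquiv_tmul_apply, hΦ]
        have : (c' • LinearMap.baseChange C' (f.restrictScalars C)) ((1 : C') ⊗ₜ[C] m)
            = c' ⊗ₜ[C] f m := by
          rw [LinearMap.smul_apply, LinearMap.baseChange_tmul, TensorProduct.smul_tmul',
            smul_eq_mul, mul_one, LinearMap.restrictScalars_apply]
        rw [this, bcEquiv_tmul_apply, LinearMap.smul_apply]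
    | add x y hx hy => simp [map_add, hx, hy]
  have hinj : Function.Injective Φ := by
    rw [injective_iff_map_eq_zero]
    intro x hx
    have h0 : bcEquiv C C' (M →ₗ[A] N) x = 0 := by
      ext i m
      rw [key1 x i m, hx]
      simp
    exact (LinearEquiv.map_eq_zero_iff _).mp h0
  -- equivariance
  have key2 : ∀ (x : C' ⊗[C] (M →ₗ[A] N)) (a : A) (c' : C') (m : M),
      Φ x (c' ⊗ₜ[C] (a • m)) =
        LinearMap.lTensor C' (DistribMulAction.toLinearMap C N a) (Φ x (c' ⊗ₜ[C] m)) := by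
    intro x a c' m
    induction x with
    | zero => simp
    | tmul d f =>
        rw [hΦ]
        simp only [LinearMap.smul_apply, LinearMap.baseChange_tmul,
          LinearMap.restrictScalars_apply, TensorProduct.smul_tmul',
          LinearMap.lTensor_tmul, DistribSMul.toLinearMap_apply]
        rw [f.map_smul]
        rfl
    | add x y hx hy => simp [map_add, hx, hy]
  have hequiv : ∀ x, IsEquivariantMap C C' A (Φ x) := by
    intro x a
    apply TensorProduct.ext'
    intro c' m
    simp only [LinearMap.coe_comp, Function.comp_apply, LinearMap.lTensor_tmul,
      LinearMap.restrictScalars_apply, DistribSMul.toLinearMap_apply]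
    exact key2 x a c' m
  refine ⟨hinj, hequiv, ?_⟩
  -- surjectivity
  intro hfin g hg
  -- the coordinate maps
  set f : Module.Basis.ofVectorSpaceIndex C C' → (M →ₗ[A] N) := fun i =>
    { toFun := fun m => bcEquiv C C' N (g ((1 : C') ⊗ₜ[C] m)) i
      map_add' := by
        intro m m'
        show bcEquiv C C' N (g ((1 : C') ⊗ₜ[C] (m + m'))) i
          = bcEquiv C C' N (g ((1 : C') ⊗ₜ[C] m)) i
            + bcEquiv C C' N (g ((1 : C') ⊗ₜ[C] m')) i
        rw [TensorProduct.tmul_add, map_add, map_add, Finsupp.add_apply]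
      map_smul' := by
        intro a m
        show bcEquiv C C' N (g ((1 : C') ⊗ₜ[C] (a • m))) i
          = a • bcEquiv C C' N (g ((1 : C') ⊗ₜ[C] m)) i
        have h1 : (1 : C') ⊗ₜ[C] (a • m)
            = LinearMap.lTensor C' (DistribMulAction.toLinearMap C M a)
                ((1 : C') ⊗ₜ[C] m) := by
          rw [LinearMap.lTensor_tmul]; rfl
        have h2 := LinearMap.congr_fun (hg a) ((1 : C') ⊗ₜ[C] m)
        simp only [LinearMap.coe_comp, Function.comp_apply,
          LinearMap.restrictScalars_apply] at h2
        rw [h1, h2, bcEquiv_lTensor]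
        rfl } with hf
  have fval : ∀ i m, f i m = bcEquiv C C' N (g ((1 : C') ⊗ₜ[C] m)) i := fun _ _ => rfl
  have hsupp : (Function.support f).Finite := by
    rcases hfin with hC | hM
    · haveI := hC
      haveI := FiniteDimensional.fintypeBasisIndex b
      exact Set.toFinite _
    · obtain ⟨s, hs⟩ := hM.fg_top
      apply Set.Finite.subset
        (Set.Finite.biUnion s.finite_toSet
          (fun m _ => (bcEquiv C C' N (g ((1 : C') ⊗ₜ[C] m))).support.finite_toSet))
      intro i hi
      by_contra hmem
      apply hi
      simp only [Set.mem_iUnion, Finset.mem_coe, Finsupp.mem_support_iff, not_exists,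
        not_and, not_not] at hmem
      ext m
      have hm : m ∈ Submodule.span A (s : Set M) := hs ▸ Submodule.mem_top
      induction hm using Submodule.span_induction with
      | mem x hx => rw [fval]; exact hmem x hx
      | zero => simp
      | add x y _ _ hx hy => simp [map_add, hx, hy]
      | smul a x _ hx => simp [map_smul, hx]
  set T : Finset (Module.Basis.ofVectorSpaceIndex C C') := hsupp.toFinset with hT
  refine ⟨∑ i ∈ T, b i ⊗ₜ[C] f i, ?_⟩
  have key3 : ∀ m : M, Φ (∑ i ∈ T, b i ⊗ₜ[C] f i) ((1 : C') ⊗ₜ[C] m)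
      = g ((1 : C') ⊗ₜ[C] m) := by
    intro m
    rw [map_sum, LinearMap.sum_apply]
    have step : ∀ i ∈ T, Φ (b i ⊗ₜ[C] f i) ((1 : C') ⊗ₜ[C] m) = b i ⊗ₜ[C] f i m := by
      intro i _
      rw [hΦ, LinearMap.smul_apply, LinearMap.baseChange_tmul, TensorProduct.smul_tmul',
        smul_eq_mul, mul_one, LinearMap.restrictScalars_apply]
    rw [Finset.sum_congr rfl step]
    conv_rhs => rw [← bcEquiv_reconstruct (g ((1 : C') ⊗ₜ[C] m))]
    rw [Finsupp.sum]
    simp only [← fval]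
    refine (Finset.sum_subset ?_ ?_).symm
    · intro i hi
      rw [Finsupp.mem_support_iff, ← fval] at hi
      rw [hT, Set.Finite.mem_toFinset, Function.mem_support]
      intro hfi
      apply hi
      rw [hfi]
      rfl
    · intro i _ hi
      rw [Finsupp.notMem_support_iff, ← fval] at hi
      rw [hi, TensorProduct.tmul_zero]
  apply LinearMap.restrictScalars_injective C
  apply TensorProduct.ext'
  intro c' m
  have hsm : (c' ⊗ₜ[C] m : C' ⊗[C] M) = c' • ((1 : C') ⊗ₜ[C] m) := by
    rw [TensorProduct.smul_tmul', smul_eq_mul, mul_one]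
  simp only [LinearMap.restrictScalars_apply]
  rw [hsm, map_smul, map_smul, key3 m]
end
end
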